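/- Let X be a complete separable metric space, let Y and Z be compact metric spaces, and let m be a finite Borel measure on X. Let f_n : X × Y → Z and f : X × Y → Z be functions that are Borel-measurable in the first variable and continuous in the second variable, and assume that for m-almost every x ∈ X the maps f_n(x,·) converge to f(x,·) uniformly on Y. Let μ_n be finite nonnegative Borel measures on X × Y such that μ_n converges weakly to μ (i.e., ∫φ dμ_n → ∫φ dμ for every bounded continuous φ on X × Y) and such that the pushforward of each μ_n under the projection to X equals m. Then the pushforwards of μ_n under the map (x,y) ↦ (x, y, f_n(x,y)) converge weakly in the space of finite measures on X × Y × Z to the pushforward of μ under (x,y) ↦ (x, y, f(x,y)). -/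

import Mathlib

open MeasureTheory Filter

theorem measurable_of_closedBall_preimage {X E : Type*} [MeasurableSpace X]
    [PseudoMetricSpace E] [TopologicalSpace.SeparableSpace E] [MeasurableSpace E]
    [BorelSpace E] {g : X → E}
    (h : ∀ (c : E) (q : ℝ), MeasurableSet {x | dist (g x) c ≤ q}) : Measurable g := by
  obtain ⟨D, hDc, hDd⟩ := TopologicalSpace.exists_countable_dense E
  apply measurable_of_isOpen
  intro U hU
  have hdec : g ⁻¹' U = ⋃ c ∈ D, ⋃ q : ℚ, ⋃ (_ : Metric.closedBall c (q : ℝ) ⊆ U),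
      {x | dist (g x) c ≤ (q : ℝ)} := by
    ext x
    simp only [Set.mem_preimage, Set.mem_iUnion, Set.mem_setOf_eq]
    constructor
    · intro hx
      obtain ⟨r, hr, hball⟩ := Metric.isOpen_iff.1 hU _ hx
      obtain ⟨c, hcD, hc⟩ := hDd.exists_dist_lt (g x) (by positivity : (0 : ℝ) < r / 3)
      obtain ⟨q, hq1, hq2⟩ := exists_rat_btwn (show r / 3 < r / 2 by linarith)
      refine ⟨c, hcD, q, fun z hz => hball ?_, by linarith [hc, hq1]⟩
      have hzc : dist z c ≤ (q : ℝ) := hz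
      have : dist z (g x) ≤ dist z c + dist c (g x) := dist_triangle ..
      rw [dist_comm c (g x)] at this
      exact Metric.mem_ball.2 (by nlinarith)
    · rintro ⟨c, _, q, hsub, hx⟩
      exact hsub hx
  rw [hdec]
  exact MeasurableSet.biUnion hDc fun c _ =>
    MeasurableSet.iUnion fun q => MeasurableSet.iUnion fun _ => h c q

theorem stronglyMeasurable_toContinuousMap {X Y : Type*} [MeasurableSpace X] [MetricSpace Y]
    [CompactSpace Y] (g : X → C(Y, ℝ)) (h : ∀ y, Measurable fun x => (g x) y) :
    StronglyMeasurable g := by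
  borelize C(Y, ℝ)
  apply Measurable.stronglyMeasurable
  apply measurable_of_closedBall_preimage
  intro c q
  obtain ⟨DY, hDYc, hDYd⟩ := TopologicalSpace.exists_countable_dense Y
  rcases lt_or_ge q 0 with hq | hq
  · have : {x | dist (g x) c ≤ q} = ∅ := by
      ext x; simp only [Set.mem_setOf_eq, Set.mem_empty_iff_false, iff_false, not_le]
      exact lt_of_lt_of_le hq dist_nonneg
    rw [this]; exact MeasurableSet.empty
  · have heq : {x | dist (g x) c ≤ q} = ⋂ y ∈ DY, {x | dist ((g x) y) (c y) ≤ q} := by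
      ext x
      simp only [Set.mem_setOf_eq, Set.mem_iInter]
      constructor
      · intro hx y _
        exact (ContinuousMap.dist_le hq).1 hx y
      · intro hx
        rw [ContinuousMap.dist_le hq]
        intro y
        have hcl : IsClosed {y' : Y | dist ((g x) y') (c y') ≤ q} :=
          isClosed_le (((g x).continuous).dist (c.continuous)) continuous_const
        exact (hcl.closure_subset_iff.2 fun y' hy' => hx y' hy') (hDYd y)
    rw [heq]
    exact MeasurableSet.biInter hDYc fun y _ =>
      measurableSet_le ((h y).dist measurable_const) measurable_const

theorem caratheodory_measurable {X Y Z : Type*} [MeasurableSpace X] [MetricSpace Y]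
    [CompactSpace Y] [MeasurableSpace Y] [BorelSpace Y] [MetricSpace Z] [MeasurableSpace Z]
    [BorelSpace Z] (f : X × Y → Z)
    (hf_meas : ∀ y, Measurable fun x => f (x, y))
    (hf_cont : ∀ x, Continuous fun y => f (x, y)) : Measurable f := by
  have h := measurable_uncurry_of_continuous_of_measurable
    (u := fun (y : Y) (x : X) => f (x, y)) hf_cont hf_meas
  have heq : f = (Function.uncurry fun (y : Y) (x : X) => f (x, y)) ∘ Prod.swap := by
    ext p; rfl
  rw [heq]
  exact h.comp measurable_swap

theorem pushforward_weak_convergence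
    {X Y Z : Type*} [MetricSpace X] [CompleteSpace X] [TopologicalSpace.SeparableSpace X]
    [MetricSpace Y] [CompactSpace Y] [MetricSpace Z] [CompactSpace Z]
    [MeasurableSpace X] [BorelSpace X] [MeasurableSpace Y] [BorelSpace Y]
    [MeasurableSpace Z] [BorelSpace Z]
    (m : Measure X) [IsFiniteMeasure m]
    (f : X × Y → Z) (fn : ℕ → X × Y → Z)
    (hf_meas : ∀ y, Measurable fun x => f (x, y))
    (hf_cont : ∀ x, Continuous fun y => f (x, y))
    (hfn_meas : ∀ n y, Measurable fun x => fn n (x, y))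
    (hfn_cont : ∀ n x, Continuous fun y => fn n (x, y))
    (hconv : ∀ᵐ x ∂m,
      TendstoUniformly (fun n y => fn n (x, y)) (fun y => f (x, y)) atTop)
    (μ : ℕ → Measure (X × Y)) (μlim : Measure (X × Y))
    (hμfin : ∀ n, IsFiniteMeasure (μ n)) [IsFiniteMeasure μlim]
    (hweak : ∀ φ : BoundedContinuousFunction (X × Y) ℝ,
      Tendsto (fun n => ∫ p, φ p ∂(μ n)) atTop (nhds (∫ p, φ p ∂μlim)))
    (hproj : ∀ n, (μ n).map Prod.fst = m) :
    ∀ ψ : BoundedContinuousFunction (X × Y × Z) ℝ,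
      Tendsto (fun n => ∫ q, ψ q ∂((μ n).map (fun p => (p.1, p.2, fn n p))))
        atTop (nhds (∫ q, ψ q ∂(μlim.map (fun p => (p.1, p.2, f p))))) := by
  intro ψ
  set C := ‖ψ‖ with hC
  have hF : Measurable f := caratheodory_measurable f hf_meas hf_cont
  have hFn : ∀ n, Measurable (fn n) := fun n =>
    caratheodory_measurable (fn n) (hfn_meas n) (hfn_cont n)
  -- the composed integrands
  set g : X × Y → ℝ := fun p => ψ (p.1, p.2, f p) with hg_def
  set gn : ℕ → X × Y → ℝ := fun n p => ψ (p.1, p.2, fn n p) with hgn_def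
  have hg_meas : Measurable g :=
    ψ.continuous.measurable.comp (measurable_fst.prodMk (measurable_snd.prodMk hF))
  have hgn_meas : ∀ n, Measurable (gn n) := fun n =>
    ψ.continuous.measurable.comp (measurable_fst.prodMk (measurable_snd.prodMk (hFn n)))
  have hg_bdd : ∀ p, ‖g p‖ ≤ C := fun p => ψ.norm_coe_le_norm _
  have hgn_bdd : ∀ n p, ‖gn n p‖ ≤ C := fun n p => ψ.norm_coe_le_norm _
  have hg_int : ∀ (ν : Measure (X × Y)) [IsFiniteMeasure ν], Integrable g ν := by
    intro ν _
    exact ⟨hg_meas.aestronglyMeasurable, HasFiniteIntegral.of_bounded (ae_of_all _ hg_bdd)⟩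
  have hgn_int : ∀ n, Integrable (gn n) (μ n) := by
    intro n
    haveI := hμfin n
    exact ⟨(hgn_meas n).aestronglyMeasurable,
      HasFiniteIntegral.of_bounded (ae_of_all _ (hgn_bdd n))⟩
  -- rewrite the pushforward integrals
  have hmapn : ∀ n, ∫ q, ψ q ∂((μ n).map (fun p => (p.1, p.2, fn n p))) = ∫ p, gn n p ∂(μ n) := by
    intro n
    exact integral_map (measurable_fst.prodMk (measurable_snd.prodMk (hFn n))).aemeasurable
      ψ.continuous.stronglyMeasurable.aestronglyMeasurable
  have hmaplim : ∫ q, ψ q ∂(μlim.map (fun p => (p.1, p.2, f p))) = ∫ p, g p ∂μlim :=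
    integral_map (measurable_fst.prodMk (measurable_snd.prodMk hF)).aemeasurable
      ψ.continuous.stronglyMeasurable.aestronglyMeasurable
  simp only [hmapn, hmaplim]
  -- Step A : the error term
  have hA : Tendsto (fun n => ∫ p, gn n p ∂(μ n) - ∫ p, g p ∂(μ n)) atTop (nhds 0) := by
      obtain ⟨DY, hDYc, hDYd⟩ := TopologicalSpace.exists_countable_dense Y
      set e : ℕ → X → ENNReal := fun n x => ⨆ y ∈ DY, (‖gn n (x, y) - g (x, y)‖₊ : ENNReal)
        with he_def
      have hterm_meas : ∀ n (y : Y), Measurable fun x => (‖gn n (x, y) - g (x, y)‖₊ : ENNReal) := by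
        intro n y
        apply Measurable.coe_nnreal_ennreal
        apply Measurable.nnnorm
        exact ((hgn_meas n).comp (measurable_id.prodMk measurable_const)).sub
          (hg_meas.comp (measurable_id.prodMk measurable_const))
      have he_meas : ∀ n, Measurable (e n) := by
        intro n
        exact Measurable.biSup DY hDYc fun y _ => hterm_meas n y
      -- pointwise bound over all y by density
      have hgg : ∀ n (p : X × Y), (‖gn n p - g p‖₊ : ENNReal) ≤ e n p.1 := by
        rintro n ⟨x, y⟩
        have h1 : Continuous fun y' => gn n (x, y') := by
          rw [hgn_def]
          exact ψ.continuous.comp (continuous_const.prodMk (continuous_id.prodMk (hfn_cont n x)))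
        have h2 : Continuous fun y' => g (x, y') := by
          rw [hg_def]
          exact ψ.continuous.comp (continuous_const.prodMk (continuous_id.prodMk (hf_cont x)))
        have hNc : Continuous fun y' => (‖gn n (x, y') - g (x, y')‖₊ : ENNReal) :=
          ENNReal.continuous_coe.comp (h1.sub h2).nnnorm
        have hcl : IsClosed {y' : Y | (‖gn n (x, y') - g (x, y')‖₊ : ENNReal) ≤ e n x} :=
          isClosed_le hNc continuous_const
        have hsub : DY ⊆ {y' : Y | (‖gn n (x, y') - g (x, y')‖₊ : ENNReal) ≤ e n x} := by
          intro y' hy'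
          exact le_biSup (fun y'' => (‖gn n (x, y'') - g (x, y'')‖₊ : ENNReal)) hy'
        exact (hcl.closure_subset_iff.2 hsub) (hDYd y)
      have he_le : ∀ n x, e n x ≤ ENNReal.ofReal (2 * C) := by
        intro n x
        refine iSup₂_le fun y _ => ?_
        rw [← enorm_eq_nnnorm, ← ofReal_norm]
        apply ENNReal.ofReal_le_ofReal
        calc ‖gn n (x, y) - g (x, y)‖ ≤ ‖gn n (x, y)‖ + ‖g (x, y)‖ := norm_sub_le _ _
          _ ≤ C + C := by
              rw [hgn_def, hg_def]
              exact add_le_add (ψ.norm_coe_le_norm _) (ψ.norm_coe_le_norm _)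
          _ = 2 * C := by ring
      have hfin : ∀ n, ∫⁻ x, e n x ∂m ≠ ⊤ := by
        intro n
        refine ne_top_of_le_ne_top ?_ (lintegral_mono (he_le n))
        rw [lintegral_const]
        exact ENNReal.mul_ne_top ENNReal.ofReal_ne_top (measure_ne_top m _)
      -- the error bound
      have hbound : ∀ n, |∫ p, gn n p ∂(μ n) - ∫ p, g p ∂(μ n)| ≤ (∫⁻ x, e n x ∂m).toReal := by
        intro n
        haveI := hμfin n
        rw [← integral_sub (hgn_int n) (hg_int (μ n))]
        have h1 : |∫ p, (gn n p - g p) ∂(μ n)| ≤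
            (∫⁻ p, ENNReal.ofReal ‖gn n p - g p‖ ∂(μ n)).toReal := by
          rw [← Real.norm_eq_abs]
          exact norm_integral_le_lintegral_norm _
        refine h1.trans ?_
        have h2 : ∫⁻ p, ENNReal.ofReal ‖gn n p - g p‖ ∂(μ n) ≤ ∫⁻ x, e n x ∂m := by
          have : ∫⁻ p, ENNReal.ofReal ‖gn n p - g p‖ ∂(μ n) ≤ ∫⁻ p, e n p.1 ∂(μ n) := by
            refine lintegral_mono fun p => ?_
            rw [ofReal_norm, enorm_eq_nnnorm]
            exact hgg n p
          refine this.trans ?_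
          rw [← hproj n, lintegral_map (he_meas n) measurable_fst]
        exact ENNReal.toReal_mono (hfin n) h2
      -- the lintegral tends to zero
      have htend0 : Tendsto (fun n => ∫⁻ x, e n x ∂m) atTop (nhds 0) := by
        have := tendsto_lintegral_of_dominated_convergence (μ := m)
          (F := fun n x => e n x) (f := fun _ => (0 : ENNReal))
          (bound := fun _ => ENNReal.ofReal (2 * C)) he_meas
          (fun n => ae_of_all _ (he_le n))
          (by rw [lintegral_const]; exact ENNReal.mul_ne_top ENNReal.ofReal_ne_top (measure_ne_top m _))
          ?_
        · simpa using this
        · filter_upwards [hconv] with x hx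
          rw [ENNReal.tendsto_nhds_zero]
          intro ε hε
          obtain ⟨r, hr0, hrε⟩ : ∃ r : ℝ, 0 < r ∧ ENNReal.ofReal r ≤ ε := by
            rcases eq_or_ne ε ⊤ with rfl | hεt
            · exact ⟨1, one_pos, le_top⟩
            · exact ⟨ε.toReal, ENNReal.toReal_pos hε.ne' hεt,
                by rw [ENNReal.ofReal_toReal hεt]⟩
          -- uniform continuity of ψ(x, ·, ·)
          have hΨc : Continuous fun q : Y × Z => ψ (x, q.1, q.2) :=
            ψ.continuous.comp (continuous_const.prodMk continuous_id)
          have hU := CompactSpace.uniformContinuous_of_continuous hΨc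
          obtain ⟨δ, hδ0, hδ⟩ := Metric.uniformContinuous_iff.1 hU r hr0
          have hev := Metric.tendstoUniformly_iff.1 hx δ hδ0
          filter_upwards [hev] with n hn
          refine le_trans ?_ hrε
          refine iSup₂_le fun y _ => ?_
          rw [← enorm_eq_nnnorm, ← ofReal_norm]
          apply ENNReal.ofReal_le_ofReal
          have hdist : dist ((y, fn n (x, y)) : Y × Z) ((y, f (x, y)) : Y × Z) < δ := by
            rw [Prod.dist_eq]
            simp only [dist_self]
            exact max_lt hδ0 (by rw [dist_comm]; exact hn y)
          have := hδ hdist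
          rw [hgn_def, hg_def]
          simp only [Real.dist_eq] at this
          rw [Real.norm_eq_abs]
          exact le_of_lt this
      have htoReal : Tendsto (fun n => (∫⁻ x, e n x ∂m).toReal) atTop (nhds 0) := by
        have h0 : Tendsto ENNReal.toReal (nhds 0) (nhds ((0 : ENNReal)).toReal) :=
          (ENNReal.tendsto_toReal (by simp)).mono_left le_rfl
        rw [ENNReal.toReal_zero] at h0
        exact h0.comp htend0
      exact squeeze_zero_norm (fun n => by simpa [Real.norm_eq_abs] using hbound n) htoReal
  -- Step B : weak convergence against the Caratheodory function g
  have hB : Tendsto (fun n => ∫ p, g p ∂(μ n)) atTop (nhds (∫ p, g p ∂μlim)) := by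
      -- Step B0 : the first marginal of μlim is also m
      have hprojlim : μlim.map Prod.fst = m := by
        haveI : IsFiniteMeasure (μlim.map Prod.fst) := Measure.isFiniteMeasure_map _ _
        apply ext_of_forall_lintegral_eq_of_IsFiniteMeasure
        intro φ
        -- turn the nnreal-valued test function into a real-valued one
        have lip : LipschitzWith 1 ((↑) : NNReal → ℝ) := by
          apply LipschitzWith.of_dist_le_mul
          intro a b
          rw [NNReal.dist_eq, Real.dist_eq]; simp
        set φR : BoundedContinuousFunction X ℝ :=
          BoundedContinuousFunction.comp _ lip φ with hφR
        have hint : ∀ (ν : Measure X) [IsFiniteMeasure ν],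
            ∫⁻ x, (φ x : ENNReal) ∂ν = ENNReal.ofReal (∫ x, φR x ∂ν) := by
          intro ν _
          rw [ofReal_integral_eq_lintegral_ofReal (φR.integrable ν)
            (ae_of_all _ fun x => (φ x).coe_nonneg)]
          congr 1
          ext x
          rw [show φR x = ((φ x : ℝ)) from rfl, ENNReal.ofReal_coe_nnreal]
        rw [hint, hint]
        congr 1
        -- the real integrals agree by weak convergence
        have hcomp := hweak (φR.compContinuous ⟨Prod.fst, continuous_fst⟩)
        have heqn : ∀ n, ∫ p, (φR.compContinuous ⟨Prod.fst, continuous_fst⟩) p ∂(μ n)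
            = ∫ x, φR x ∂m := by
          intro n
          haveI := hμfin n
          have : ∫ p, φR p.1 ∂(μ n) = ∫ x, φR x ∂((μ n).map Prod.fst) :=
            (integral_map measurable_fst.aemeasurable
              φR.continuous.stronglyMeasurable.aestronglyMeasurable).symm
          simpa [hproj n] using this
        have heqlim : ∫ p, (φR.compContinuous ⟨Prod.fst, continuous_fst⟩) p ∂μlim
            = ∫ x, φR x ∂(μlim.map Prod.fst) :=
          (integral_map measurable_fst.aemeasurable
            φR.continuous.stronglyMeasurable.aestronglyMeasurable).symm
        simp only [heqn] at hcomp
        rw [heqlim] at hcomp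
        exact (tendsto_nhds_unique tendsto_const_nhds hcomp).symm
      -- the Caratheodory function viewed as a map into C(Y, ℝ)
      have hcont : ∀ x, Continuous fun y => g (x, y) := by
        intro x
        rw [hg_def]
        exact ψ.continuous.comp (continuous_const.prodMk (continuous_id.prodMk (hf_cont x)))
      set h : X → C(Y, ℝ) := fun x => ⟨fun y => g (x, y), hcont x⟩ with hh_def
      have hh_meas : StronglyMeasurable h := by
        apply stronglyMeasurable_toContinuousMap
        intro y
        exact hg_meas.comp (measurable_id.prodMk measurable_const)
      have hh_bdd : ∀ x, ‖h x‖ ≤ C := by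
        intro x
        refine (ContinuousMap.norm_le _ (norm_nonneg ψ)).2 fun y => ?_
        exact hg_bdd (x, y)
      have hh_int : Integrable h m :=
        ⟨hh_meas.aestronglyMeasurable, HasFiniteIntegral.of_bounded (ae_of_all _ hh_bdd)⟩
      -- epsilon-argument
      rw [Metric.tendsto_atTop]
      intro ε hε
      obtain ⟨H, hH, _⟩ := hh_int.exists_boundedContinuous_integral_sub_le
        (by positivity : (0:ℝ) < ε / 4)
      -- the continuous test function
      have hΦc : Continuous fun p : X × Y => (H p.1) p.2 := by
        have : Continuous fun p : C(Y, ℝ) × Y => p.1 p.2 := continuous_eval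
        exact this.comp ((H.continuous.comp continuous_fst).prodMk continuous_snd)
      set Φ : BoundedContinuousFunction (X × Y) ℝ :=
        BoundedContinuousFunction.ofNormedAddCommGroup (fun p => (H p.1) p.2) hΦc ‖H‖
          (fun p => le_trans ((H p.1).norm_coe_le_norm p.2) (H.norm_coe_le_norm p.1)) with hΦ_def
      -- the quantity controlling the distance
      set u : X → ℝ := fun x => ‖h x - H x‖ with hu_def
      have hu_meas : StronglyMeasurable u := (hh_meas.sub H.continuous.stronglyMeasurable).norm
      have hu_bdd : ∀ x, ‖u x‖ ≤ C + ‖H‖ := by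
        intro x
        rw [hu_def, norm_norm]
        exact (norm_sub_le _ _).trans (add_le_add (hh_bdd x) (H.norm_coe_le_norm x))
      have hu_nonneg : 0 ≤ ∫ x, u x ∂m := integral_nonneg fun x => norm_nonneg _
      -- pointwise: |g p - Φ p| ≤ u p.1
      have hpt : ∀ p : X × Y, |g p - Φ p| ≤ u p.1 := by
        rintro ⟨x, y⟩
        have : g (x, y) - Φ (x, y) = (h x - H x) y := by
          simp only [ContinuousMap.sub_apply]; rfl
        rw [this, ← Real.norm_eq_abs]
        exact (h x - H x).norm_coe_le_norm y
      -- the uniform estimate for any measure with first marginal m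
      have hest : ∀ (ν : Measure (X × Y)) [IsFiniteMeasure ν], ν.map Prod.fst = m →
          |∫ p, g p ∂ν - ∫ p, Φ p ∂ν| ≤ ε / 4 := by
        intro ν _ hν
        have hΦ_int : Integrable Φ ν := Φ.integrable ν
        have hufst_int : Integrable (fun p : X × Y => u p.1) ν := by
          refine ⟨(hu_meas.comp_measurable measurable_fst).aestronglyMeasurable,
            HasFiniteIntegral.of_bounded (C := C + ‖H‖) (ae_of_all _ fun p => hu_bdd p.1)⟩
        have h1 : |∫ p, g p ∂ν - ∫ p, Φ p ∂ν| ≤ ∫ p, |g p - Φ p| ∂ν := by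
          rw [← integral_sub (hg_int ν) hΦ_int]
          simpa [Real.norm_eq_abs] using norm_integral_le_integral_norm (fun p => g p - Φ p) (μ := ν)
        have h2 : ∫ p, |g p - Φ p| ∂ν ≤ ∫ p, u p.1 ∂ν := by
          refine integral_mono ((hg_int ν).sub hΦ_int).abs hufst_int hpt
        have h3 : ∫ p, u p.1 ∂ν = ∫ x, u x ∂m := by
          rw [← hν]
          exact (integral_map measurable_fst.aemeasurable hu_meas.aestronglyMeasurable).symm
        have h4 : ∫ x, u x ∂m ≤ ε / 4 := hH
        linarith [h1, h2]
      -- conclude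
      obtain ⟨N, hN⟩ := Metric.tendsto_atTop.1 (hweak Φ) (ε / 4) (by positivity)
      refine ⟨N, fun n hn => ?_⟩
      haveI := hμfin n
      have d1 := hest (μ n) (hproj n)
      have d2 := hest μlim hprojlim
      have d3 := hN n hn
      rw [Real.dist_eq] at d3 ⊢
      have t1 : |∫ p, g p ∂(μ n) - ∫ p, g p ∂μlim| ≤
          |∫ p, g p ∂(μ n) - ∫ p, Φ p ∂μlim| + |∫ p, Φ p ∂μlim - ∫ p, g p ∂μlim| :=
        abs_sub_le _ _ _
      have t2 : |∫ p, g p ∂(μ n) - ∫ p, Φ p ∂μlim| ≤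
          |∫ p, g p ∂(μ n) - ∫ p, Φ p ∂(μ n)| + |∫ p, Φ p ∂(μ n) - ∫ p, Φ p ∂μlim| :=
        abs_sub_le _ _ _
      have t3 : |∫ p, Φ p ∂μlim - ∫ p, g p ∂μlim| = |∫ p, g p ∂μlim - ∫ p, Φ p ∂μlim| :=
        abs_sub_comm _ _
      rw [t3] at t1
      linarith
  have := hA.add hB
  rw [zero_add] at this
  convert this using 2 with n
  ring
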